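/- Fix r_comm, r_comp, f_max, Δf with 0 < Δf < f_max. The compensating bandwidth ΔB(B_max) = B_max / ((r_comp/r_comm)(f_max²/(Δf B_max) − f_max/B_max) − 1), viewed on the range of B_max where the denominator is positive, is strictly increasing in B_max. -/

import Mathlib

theorem compensating_bandwidth_strict_mono
    (rcomm rcomp fmax Δf : ℝ)
    (hc : 0 < rcomm) (hp : 0 < rcomp) (hf : 0 < fmax)
    (hΔf : 0 < Δf) (hΔf' : Δf < fmax) :
    StrictMonoOn
      (fun B : ℝ => B /
        ((rcomp / rcomm) * (fmax ^ 2 / (Δf * B) - fmax / B) - 1))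
      {B : ℝ | 0 < B ∧
        0 < (rcomp / rcomm) * (fmax ^ 2 / (Δf * B) - fmax / B) - 1} := by
  set C : ℝ := (rcomp / rcomm) * (fmax ^ 2 / Δf - fmax) with hC
  have key : ∀ B : ℝ, 0 < B →
      (rcomp / rcomm) * (fmax ^ 2 / (Δf * B) - fmax / B) - 1 = (C - B) / B := by
    intro B hB
    field_simp [hC]
    rw [hC]
    field_simp
  intro a ⟨ha, ha'⟩ b ⟨hb, hb'⟩ hab
  simp only
  rw [key a ha] at ha' ⊢
  rw [key b hb] at hb' ⊢
  have haC : a < C := by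
    have := (div_pos_iff.mp ha')
    rcases this with ⟨h1, _⟩ | ⟨_, h2⟩
    · linarith
    · linarith
  have hbC : b < C := by
    have := (div_pos_iff.mp hb')
    rcases this with ⟨h1, _⟩ | ⟨_, h2⟩
    · linarith
    · linarith
  rw [div_div_eq_mul_div, div_div_eq_mul_div,
    div_lt_div_iff₀ (by linarith) (by linarith)]
  have hC0 : 0 < C := ha.trans haC
  nlinarith [mul_pos (sub_pos.mpr hab) (mul_pos hb (sub_pos.mpr haC)),
    mul_pos (sub_pos.mpr hab) (mul_pos ha hC0)]
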